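/- Let A and B be finite types, let k ≥ 2 be an integer, and let σ be a density matrix on A × B (positive semidefinite with tr σ = 1). Then σ ∈ PPT_k(A:B) if and only if σ^{T_B} is positive semidefinite. -/

import Mathlib

open Matrix
open scoped ComplexOrder

/-- Total positive semidefinite square root: the PSD square root of `M` if `M` is PSD,
and junk value `0` otherwise. -/
noncomputable def msqrt {n : Type*} [Fintype n] [DecidableEq n]
    (M : Matrix n n ℂ) : Matrix n n ℂ :=
  letI := Classical.dec M.PosSemidef
  if h : M.PosSemidef then
    (h.1.eigenvectorUnitary : Matrix n n ℂ) * diagonal ((↑) ∘ (√·) ∘ h.1.eigenvalues) *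
      (star h.1.eigenvectorUnitary : Matrix n n ℂ) else 0

open scoped MatrixOrder in
lemma msqrt_eq_of_sq {n : Type*} [Fintype n] [DecidableEq n] {M S : Matrix n n ℂ}
    (hM : M.PosSemidef) (hS : S.PosSemidef) (h : S ^ 2 = M) : msqrt M = S := by
  have hc : CFC.sqrt M = S := CFC.sqrt_unique (by rw [← sq]; exact h) hS.nonneg
  unfold msqrt
  rw [dif_pos hM, ← hc, CFC.sqrt_eq_cfc, cfc_nnreal_eq_real _ M, hM.1.cfc_eq]
  simp only [IsHermitian.cfc, Unitary.conjStarAlgAut_apply]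
  congr 2
  ext a b
  simp [diagonal_apply, Real.coe_sqrt, Real.coe_toNNReal', max_eq_left (hM.eigenvalues_nonneg a)]

/-- The trace norm `‖M‖₁ = tr √(Mᴴ M)` of a complex matrix, as a real number. -/
noncomputable def traceNorm {n : Type*} [Fintype n] [DecidableEq n]
    (M : Matrix n n ℂ) : ℝ :=
  (msqrt (Mᴴ * M)).trace.re

/-- The partial transpose over the second party `B`:
`M^{T_B}((a,b),(a',b')) = M((a,b'),(a',b))`. -/
def ptB {A B : Type*} (M : Matrix (A × B) (A × B) ℂ) : Matrix (A × B) (A × B) ℂ :=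
  fun x y => M (x.1, y.2) (y.1, x.2)

/-- The set `PPT_k(A:B)`: positive semidefinite `ω₁` such that there exist `ω₂, …, ω_k` with
`−ω_{i+1} ⪯ ω_i^{T_B} ⪯ ω_{i+1}` for all `1 ≤ i ≤ k−1` and `‖ω_k^{T_B}‖₁ ≤ 1`. -/
def PPTset {A B : Type*} [Fintype A] [Fintype B] [DecidableEq A] [DecidableEq B]
    (k : ℕ) : Set (Matrix (A × B) (A × B) ℂ) :=
  {σ | σ.PosSemidef ∧ ∃ ω : ℕ → Matrix (A × B) (A × B) ℂ, ω 1 = σ ∧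
    (∀ i, 1 ≤ i → i ≤ k - 1 →
      (ω (i + 1) - ptB (ω i)).PosSemidef ∧ (ω (i + 1) + ptB (ω i)).PosSemidef) ∧
    traceNorm (ptB (ω k)) ≤ 1}

section helpers
variable {n : Type*} [Fintype n] [DecidableEq n]

lemma psd_trace_nonneg {M : Matrix n n ℂ} (hM : M.PosSemidef) : 0 ≤ M.trace := by
  unfold Matrix.trace
  refine Finset.sum_nonneg fun i _ => ?_
  have := hM.dotProduct_mulVec_nonneg (Pi.single i 1)
  simpa [dotProduct, Matrix.mulVec, Pi.single_apply, Matrix.diag] using this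

open scoped MatrixOrder in
lemma trace_mul_psd_nonneg {P Q : Matrix n n ℂ} (hP : P.PosSemidef) (hQ : Q.PosSemidef) :
    0 ≤ (P * Q).trace := by
  obtain ⟨B, rfl⟩ := CStarAlgebra.nonneg_iff_eq_star_mul_self.mp (Matrix.nonneg_iff_posSemidef.mpr hQ)
  rw [← mul_assoc, trace_mul_cycle]
  exact psd_trace_nonneg (hP.mul_mul_conjTranspose_same B)

lemma cnjd_mul (U : Matrix n n ℂ) (hU : star U * U = 1) (f g : n → ℝ) :
    (U * diagonal (fun i => (f i : ℂ)) * star U) * (U * diagonal (fun i => (g i : ℂ)) * star U)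
      = U * diagonal (fun i => ((f i * g i : ℝ) : ℂ)) * star U := by
  have hd : diagonal (fun i => (f i : ℂ)) * diagonal (fun i => (g i : ℂ))
      = diagonal (fun i => ((f i * g i : ℝ) : ℂ)) := by
    rw [diagonal_mul_diagonal]; congr 1; funext i; push_cast; ring
  simp only [mul_assoc]
  rw [← mul_assoc (star U) U, hU, one_mul, ← mul_assoc (diagonal _) (diagonal _), hd]

lemma cnjd_trace (U : Matrix n n ℂ) (hU : star U * U = 1) (f : n → ℝ) :
    (U * diagonal (fun i => (f i : ℂ)) * star U).trace = ∑ i, (f i : ℂ) := by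
  rw [trace_mul_cycle, hU, one_mul, trace_diagonal]

lemma cnjd_psd (U : Matrix n n ℂ) (f : n → ℝ) (hf : ∀ i, 0 ≤ f i) :
    (U * diagonal (fun i => (f i : ℂ)) * star U).PosSemidef := by
  rw [Matrix.star_eq_conjTranspose]
  exact (Matrix.posSemidef_diagonal_iff.mpr fun i => by
    simpa using Complex.zero_le_real.mpr (hf i)).mul_mul_conjTranspose_same U

end helpers

section herm
variable {n : Type*} [Fintype n] [DecidableEq n] {X : Matrix n n ℂ}

lemma herm_spec (hX : X.IsHermitian) :
    X = (hX.eigenvectorUnitary : Matrix n n ℂ) * diagonal (fun i => (hX.eigenvalues i : ℂ))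
      * star (hX.eigenvectorUnitary : Matrix n n ℂ) := hX.spectral_theorem

lemma herm_unit (hX : X.IsHermitian) :
    star (hX.eigenvectorUnitary : Matrix n n ℂ) * (hX.eigenvectorUnitary : Matrix n n ℂ) = 1 :=
  (Matrix.mem_unitaryGroup_iff').mp (IsHermitian.eigenvectorUnitary hX).2

lemma herm_unit' (hX : X.IsHermitian) :
    (hX.eigenvectorUnitary : Matrix n n ℂ) * star (hX.eigenvectorUnitary : Matrix n n ℂ) = 1 :=
  (Matrix.mem_unitaryGroup_iff).mp (IsHermitian.eigenvectorUnitary hX).2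

lemma herm_trace_eq (hX : X.IsHermitian) : X.trace = ∑ i, (hX.eigenvalues i : ℂ) := by
  conv_lhs => rw [herm_spec hX]
  exact cnjd_trace _ (herm_unit hX) _

lemma traceNorm_herm (hX : X.IsHermitian) : traceNorm X = ∑ i, |hX.eigenvalues i| := by
  set U := (hX.eigenvectorUnitary : Matrix n n ℂ) with hUdef
  set lam := hX.eigenvalues with hlamdef
  have hXX : (Xᴴ * X).PosSemidef := posSemidef_conjTranspose_mul_self X
  set S := U * diagonal (fun i => ((|lam i| : ℝ) : ℂ)) * star U with hSdef
  have hSpsd : S.PosSemidef := cnjd_psd U _ (fun i => abs_nonneg _)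
  have hS2 : S ^ 2 = Xᴴ * X := by
    rw [pow_two, hX.eq]
    conv_rhs => rw [herm_spec hX]
    rw [hSdef, cnjd_mul U (herm_unit hX), cnjd_mul U (herm_unit hX)]
    have hfun : (fun i => ((|lam i| * |lam i| : ℝ) : ℂ)) = fun i => ((lam i * lam i : ℝ) : ℂ) := by
      funext i; rw [abs_mul_abs_self]
    rw [hfun]
  have hmsqrt : msqrt (Xᴴ * X) = S := by
    exact msqrt_eq_of_sq hXX hSpsd hS2
  rw [traceNorm, hmsqrt, hSdef, cnjd_trace U (herm_unit hX), ← Complex.ofReal_sum,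
    Complex.ofReal_re]

lemma claimA (hX : X.IsHermitian) : X.trace.re ≤ traceNorm X := by
  rw [traceNorm_herm hX, herm_trace_eq hX, ← Complex.ofReal_sum, Complex.ofReal_re]
  exact Finset.sum_le_sum fun i _ => le_abs_self _

lemma claimB (hX : X.IsHermitian) (h : traceNorm X ≤ X.trace.re) : X.PosSemidef := by
  rw [traceNorm_herm hX, herm_trace_eq hX, ← Complex.ofReal_sum, Complex.ofReal_re] at h
  refine hX.posSemidef_iff_eigenvalues_nonneg.mpr fun i => ?_
  have hle : ∀ j ∈ Finset.univ, hX.eigenvalues j ≤ |hX.eigenvalues j| :=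
    fun j _ => le_abs_self _
  have := (Finset.sum_eq_sum_iff_of_le hle).mp
    (le_antisymm (Finset.sum_le_sum hle) h) i (Finset.mem_univ i)
  rw [this]
  exact abs_nonneg _

lemma claimC {Y : Matrix n n ℂ} (hX : X.IsHermitian)
    (h1 : (Y - X).PosSemidef) (h2 : (Y + X).PosSemidef) :
    traceNorm X ≤ Y.trace.re := by
  set U := (hX.eigenvectorUnitary : Matrix n n ℂ) with hUdef
  set lam := hX.eigenvalues with hlamdef
  set e : n → ℝ := fun i => if 0 ≤ lam i then 1 else 0 with hedef
  set P := U * diagonal (fun i => ((e i : ℝ) : ℂ)) * star U with hPdef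
  set Q := U * diagonal (fun i => ((1 - e i : ℝ) : ℂ)) * star U with hQdef
  have hP : P.PosSemidef := cnjd_psd U _ (fun i => by rw [hedef]; dsimp; split <;> norm_num)
  have hQ : Q.PosSemidef := cnjd_psd U _ (fun i => by rw [hedef]; dsimp; split <;> norm_num)
  have hPQ : P + Q = 1 := by
    rw [hPdef, hQdef, ← add_mul, ← mul_add, diagonal_add]
    have h12 : (fun i => ((e i : ℝ) : ℂ) + ((1 - e i : ℝ) : ℂ)) = fun _ => (1 : ℂ) := by
      funext i; push_cast; ring
    rw [show (diagonal fun i => ((e i : ℝ) : ℂ) + ((1 - e i : ℝ) : ℂ)) = (1 : Matrix n n ℂ) by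
      rw [h12, diagonal_one], mul_one, herm_unit' hX]
  have hXP : (X * P).trace = ∑ i, ((lam i * e i : ℝ) : ℂ) := by
    conv_lhs => rw [herm_spec hX]
    rw [hPdef, cnjd_mul U (herm_unit hX), cnjd_trace U (herm_unit hX)]
  have hXQ : (X * Q).trace = ∑ i, ((lam i * (1 - e i) : ℝ) : ℂ) := by
    conv_lhs => rw [herm_spec hX]
    rw [hQdef, cnjd_mul U (herm_unit hX), cnjd_trace U (herm_unit hX)]
  have ht : 0 ≤ ((Y - X) * P).trace + ((Y + X) * Q).trace :=
    add_nonneg (trace_mul_psd_nonneg h1 hP) (trace_mul_psd_nonneg h2 hQ)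
  have hYPQ : (Y * P).trace + (Y * Q).trace = Y.trace := by
    rw [← trace_add, ← mul_add, hPQ, mul_one]
  have hsum : ((Y - X) * P).trace + ((Y + X) * Q).trace
      = Y.trace - ∑ i, ((|lam i| : ℝ) : ℂ) := by
    rw [sub_mul, add_mul, trace_sub, trace_add, hXP, hXQ]
    have habs : ∀ i : n, (lam i * (1 - e i) : ℝ) - (lam i * e i : ℝ) = -|lam i| := by
      intro i
      rw [hedef]; dsimp; split_ifs with h
      · rw [abs_of_nonneg h]; ring
      · rw [abs_of_neg (lt_of_not_ge h)]; ring
    have : (∑ i, ((lam i * (1 - e i) : ℝ) : ℂ)) - ∑ i, ((lam i * e i : ℝ) : ℂ)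
        = -∑ i, ((|lam i| : ℝ) : ℂ) := by
      rw [← Finset.sum_sub_distrib, ← Finset.sum_neg_distrib]
      refine Finset.sum_congr rfl fun i _ => ?_
      rw [← Complex.ofReal_sub, habs i]
      push_cast; ring
    calc (Y * P).trace - (∑ i, ((lam i * e i : ℝ) : ℂ))
          + ((Y * Q).trace + ∑ i, ((lam i * (1 - e i) : ℝ) : ℂ))
        = ((Y * P).trace + (Y * Q).trace)
          + ((∑ i, ((lam i * (1 - e i) : ℝ) : ℂ)) - ∑ i, ((lam i * e i : ℝ) : ℂ)) := by ring
      _ = Y.trace - ∑ i, ((|lam i| : ℝ) : ℂ) := by rw [hYPQ, this]; ring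
  rw [hsum] at ht
  have hre := (Complex.le_def.mp ht).1
  simp only [Complex.zero_re, Complex.sub_re, ← Complex.ofReal_sum, Complex.ofReal_re] at hre
  rw [traceNorm_herm hX]
  linarith

end herm

section ptb
variable {A B : Type*} [Fintype A] [Fintype B] [DecidableEq A] [DecidableEq B]

lemma ptB_ptB (M : Matrix (A × B) (A × B) ℂ) : ptB (ptB M) = M := rfl

lemma ptB_isHermitian {M : Matrix (A × B) (A × B) ℂ} (hM : M.IsHermitian) :
    (ptB M).IsHermitian := by
  ext ⟨a, b⟩ ⟨c, d⟩
  have := congrFun (congrFun hM (a, d)) (c, b)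
  simpa [ptB, Matrix.conjTranspose_apply] using this

lemma ptB_trace (M : Matrix (A × B) (A × B) ℂ) : (ptB M).trace = M.trace := rfl

lemma traceNorm_psd {n : Type*} [Fintype n] [DecidableEq n] {M : Matrix n n ℂ}
    (hM : M.PosSemidef) : traceNorm M = M.trace.re := by
  have hXX : (Mᴴ * M).PosSemidef := posSemidef_conjTranspose_mul_self M
  have h2 : M ^ 2 = Mᴴ * M := by rw [pow_two, hM.1.eq]
  have : msqrt (Mᴴ * M) = M := by
    exact msqrt_eq_of_sq hXX hM h2
  rw [traceNorm, this]

lemma half_psd {n : Type*} [Fintype n] [DecidableEq n] {M : Matrix n n ℂ}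
    (h : (M + M).PosSemidef) : M.PosSemidef := by
  constructor
  · have h1 : Mᴴ + Mᴴ = M + M := by
      have := h.1.eq; rwa [conjTranspose_add] at this
    show Mᴴ = M
    ext i j
    have := congrFun (congrFun h1 i) j
    simp only [Matrix.add_apply] at this
    have h2 : (2 : ℂ) * Mᴴ i j = 2 * M i j := by rw [two_mul, two_mul]; exact this
    exact mul_left_cancel₀ two_ne_zero h2
  · intro x
    have := h.2 x
    simp only [Matrix.add_apply, mul_add, add_mul, Finsupp.sum_add] at this
    rw [Complex.le_def] at this ⊢
    constructor
    · have := this.1; simp only [Complex.add_re, Complex.zero_re] at this ⊢; linarith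
    · have := this.2; simp only [Complex.add_im, Complex.zero_im] at this ⊢; linarith

end ptb

theorem mem_PPTset_iff_ppt {A B : Type*}
    [Fintype A] [Fintype B] [DecidableEq A] [DecidableEq B]
    (k : ℕ) (hk : 2 ≤ k) (σ : Matrix (A × B) (A × B) ℂ)
    (hσ : σ.PosSemidef) (htr : σ.trace = 1) :
    σ ∈ PPTset (A := A) (B := B) k ↔ (ptB σ).PosSemidef := by
  constructor
  · rintro ⟨hpsd, ω, hω1, hcond, hnorm⟩
    have hk1 : 1 ≤ k - 1 := by omega
    have hωpsd : ∀ j, 2 ≤ j → j ≤ k → (ω j).PosSemidef := by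
      intro j h2 hjk
      obtain ⟨hd, hs⟩ := hcond (j - 1) (by omega) (by omega)
      have hj : j - 1 + 1 = j := by omega
      rw [hj] at hd hs
      have hadd := hd.add hs
      rw [sub_add_add_cancel] at hadd
      exact half_psd hadd
    have htr' : ∀ i, 1 ≤ i → i ≤ k - 1 → (ω i).trace.re ≤ (ω (i + 1)).trace.re := by
      intro i h1 h2
      have hd := psd_trace_nonneg (hcond i h1 h2).1
      rw [trace_sub, ptB_trace] at hd
      have hre := (Complex.le_def.mp hd).1
      simp only [Complex.zero_re, Complex.sub_re] at hre
      linarith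
    have hchain : ∀ j, 2 ≤ j → j ≤ k → (ω 2).trace.re ≤ (ω j).trace.re := by
      intro j
      induction j with
      | zero => intro h; omega
      | succ m ih =>
        intro h2 hjk
        rcases Nat.lt_or_ge m 2 with hm | hm
        · have : m + 1 = 2 := by omega
          rw [this]
        · exact (ih hm (by omega)).trans (htr' m (by omega) (by omega))
    have h12 : (1 : ℝ) ≤ (ω 2).trace.re := by
      have hd := psd_trace_nonneg (hcond 1 le_rfl hk1).1
      rw [trace_sub, ptB_trace, hω1, htr] at hd
      have hre := (Complex.le_def.mp hd).1
      simp only [Complex.zero_re, Complex.sub_re, Complex.one_re] at hre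
      linarith
    have hklast : (ω k).trace.re ≤ 1 := by
      have hherm : (ptB (ω k)).IsHermitian := ptB_isHermitian (hωpsd k hk le_rfl).1
      have hA := claimA hherm
      rw [ptB_trace] at hA
      linarith
    obtain ⟨hd, hs⟩ := hcond 1 le_rfl hk1
    rw [hω1] at hd hs
    have hXherm : (ptB σ).IsHermitian := ptB_isHermitian hσ.1
    have hC := claimC hXherm hd hs
    apply claimB hXherm
    have htrp : (ptB σ).trace = 1 := by rw [ptB_trace, htr]
    rw [htrp]
    have hch := hchain k hk le_rfl
    simp only [Complex.one_re]
    linarith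
  · intro hppt
    refine ⟨hσ, fun i => if Even i then ptB σ else σ, ?_, ?_, ?_⟩
    · simp [Nat.not_even_one]
    · intro i _ _
      by_cases he : Even i
      · have ho : ¬ Even (i + 1) := by simp [Nat.even_add_one, he]
        simp only [if_pos he, if_neg ho, ptB_ptB]
        exact ⟨by rw [sub_self]; exact Matrix.PosSemidef.zero, hσ.add hσ⟩
      · have ho : Even (i + 1) := Nat.even_add_one.mpr he
        simp only [if_neg he, if_pos ho]
        exact ⟨by rw [sub_self]; exact Matrix.PosSemidef.zero, hppt.add hppt⟩
    · by_cases he : Even k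
      · simp only [if_pos he, ptB_ptB]
        rw [traceNorm_psd hσ, htr]
        simp
      · simp only [if_neg he]
        rw [traceNorm_psd hppt, ptB_trace, htr]
        simp
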